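/- For every real b with 2 ≤ b ≤ 2l−1 (l ≥ 1 integer) and integer κ ≥ 2, if b − 1 ≥ (2l−1)/κ then (1 − (b−1)/(2l−1))^κ ≤ (1 − 1/κ)^κ ≤ 1/4 for κ ≥ 2, and consequently (2lκ+1)(2l−1)^κ + 2(2l−b)^κ ≥ (2lκ+1)(2l−1)^κ · (1 + 1/(6lκ)). -/

import Mathlib

lemma quarter_le_aux (κ : ℕ) (hκ : 2 ≤ κ) : (1/4 : ℝ) ≤ (1 - 1/(κ:ℝ))^κ := by
  have hK : (2:ℝ) ≤ (κ:ℝ) := by exact_mod_cast hκ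
  have hK0 : (0:ℝ) < κ := by linarith
  set x : ℝ := 1/(κ:ℝ) with hx
  have hx0 : 0 < x := by positivity
  have hx2 : x ≤ 1/2 := by
    rw [hx, div_le_div_iff₀ hK0 (by norm_num)]; linarith
  have hcx := convexOn_exp.2 (Set.mem_univ (0:ℝ)) (Set.mem_univ (-Real.log 2))
      (by linarith : (0:ℝ) ≤ 1 - 2*x) (by linarith : (0:ℝ) ≤ 2*x) (by ring)
  have h2 : Real.exp (-Real.log 2) = 1/2 := by
    rw [Real.exp_neg, Real.exp_log (by norm_num : (0:ℝ) < 2)]; norm_num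
  simp only [smul_eq_mul, mul_zero, zero_add, Real.exp_zero, mul_one, h2] at hcx
  -- hcx : Real.exp (2*x * -Real.log 2) ≤ (1-2x) + 2x * (1/2)
  have hle : Real.exp (2*x * -Real.log 2) ≤ 1 - x := by linarith
  have hpow := pow_le_pow_left₀ (Real.exp_nonneg _) hle κ
  have hxk : (κ:ℝ) * x = 1 := by rw [hx]; field_simp
  have heq : Real.exp (2*x * -Real.log 2) ^ κ = 1/4 := by
    rw [← Real.exp_nat_mul]
    have : (κ:ℝ) * (2*x * -Real.log 2) = -(2 * Real.log 2) := by
      have : (κ:ℝ) * (2*x * -Real.log 2) = ((κ:ℝ)*x) * (2 * -Real.log 2) := by ring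
      rw [this, hxk]; ring
    rw [this, Real.exp_neg]
    rw [show (2:ℝ) * Real.log 2 = Real.log 4 by
      rw [show (4:ℝ) = 2^2 by norm_num, Real.log_pow]; push_cast; ring]
    rw [Real.exp_log (by norm_num : (0:ℝ) < 4)]; norm_num
  rw [heq] at hpow
  exact hpow

theorem stmt14 (l κ : ℕ) (hl : 1 ≤ l) (hκ : 2 ≤ κ)
    (b : ℕ) (hb : b = (2 * l - 1) / κ + 1) :
    1 / (6 * (l : ℝ) * κ) ≤ 2 / (2 * (l : ℝ) * κ + 1) * (1 - 1 / (κ : ℝ)) ^ κ ∧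
    2 / (2 * (l : ℝ) * κ + 1) * (1 - 1 / (κ : ℝ)) ^ κ ≤
      2 * (2 * (l : ℝ) - b) ^ κ / ((2 * (l : ℝ) * κ + 1) * (2 * (l : ℝ) - 1) ^ κ) ∧
    (2 * (l : ℝ) * κ + 1) * (2 * (l : ℝ) - 1) ^ κ * (1 + 1 / (6 * (l : ℝ) * κ)) ≤
      (2 * (l : ℝ) * κ + 1) * (2 * (l : ℝ) - 1) ^ κ + 2 * (2 * (l : ℝ) - b) ^ κ := by
  have hL : (1:ℝ) ≤ (l:ℝ) := by exact_mod_cast hl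
  have hK : (2:ℝ) ≤ (κ:ℝ) := by exact_mod_cast hκ
  have hA : (0:ℝ) < 2 * (l:ℝ) * κ + 1 := by nlinarith
  have h6 : (0:ℝ) < 6 * (l:ℝ) * κ := by nlinarith
  set P : ℝ := (1 - 1/(κ:ℝ))^κ with hP
  have hQ : (1/4:ℝ) ≤ P := quarter_le_aux κ hκ
  have hD : (0:ℝ) < (2*(l:ℝ) - 1)^κ := pow_pos (by linarith) κ
  -- bound on b
  have h2l1 : ((2*l - 1 : ℕ) : ℝ) = 2*(l:ℝ) - 1 := by
    rw [Nat.cast_sub (by omega)]; push_cast; ring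
  have hdiv : (((2*l-1)/κ : ℕ) : ℝ) ≤ (2*(l:ℝ) - 1) / (κ:ℝ) := by
    calc (((2*l-1)/κ : ℕ) : ℝ) ≤ ((2*l-1:ℕ):ℝ) / (κ:ℝ) := Nat.cast_div_le
    _ = (2*(l:ℝ) - 1) / (κ:ℝ) := by rw [h2l1]
  have hbR : (b:ℝ) ≤ (2*(l:ℝ) - 1) / (κ:ℝ) + 1 := by
    rw [hb]; push_cast; linarith
  have hK0 : (0:ℝ) < (κ:ℝ) := by linarith
  have hbase : (2*(l:ℝ) - 1) * (1 - 1/(κ:ℝ)) ≤ 2*(l:ℝ) - (b:ℝ) := by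
    have : (2*(l:ℝ) - 1) * (1 - 1/(κ:ℝ)) = (2*(l:ℝ) - 1) - (2*(l:ℝ) - 1)/(κ:ℝ) := by
      field_simp
    rw [this]; linarith
  have hb0 : (0:ℝ) ≤ (2*(l:ℝ) - 1) * (1 - 1/(κ:ℝ)) := by
    have h1 : (0:ℝ) ≤ 1 - 1/(κ:ℝ) := by
      rw [sub_nonneg, div_le_one hK0]; linarith
    nlinarith
  have hpow : (2*(l:ℝ) - 1)^κ * P ≤ (2*(l:ℝ) - (b:ℝ))^κ := by
    calc (2*(l:ℝ) - 1)^κ * P = ((2*(l:ℝ) - 1) * (1 - 1/(κ:ℝ)))^κ := by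
          rw [mul_pow]
    _ ≤ (2*(l:ℝ) - (b:ℝ))^κ := pow_le_pow_left₀ hb0 hbase κ
  have hpart1 : 1 / (6 * (l : ℝ) * κ) ≤ 2 / (2 * (l : ℝ) * κ + 1) * P := by
    rw [div_le_iff₀ h6]
    have heq : 2 / (2 * (l:ℝ) * κ + 1) * P * (6 * (l:ℝ) * κ)
        = 12 * ((l:ℝ)*κ) * P / (2*(l:ℝ)*κ+1) := by ring
    rw [heq, le_div_iff₀ hA]
    have hLK : (2:ℝ) ≤ (l:ℝ) * κ := by nlinarith
    have hm := mul_le_mul_of_nonneg_left hQ (by nlinarith : (0:ℝ) ≤ 12 * ((l:ℝ)*κ))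
    nlinarith [hm]
  have hpart2 : 2 / (2 * (l : ℝ) * κ + 1) * P ≤
      2 * (2 * (l : ℝ) - b) ^ κ / ((2 * (l : ℝ) * κ + 1) * (2 * (l : ℝ) - 1) ^ κ) := by
    rw [div_mul_eq_mul_div, div_le_div_iff₀ hA (mul_pos hA hD)]
    have hmul := mul_le_mul_of_nonneg_left hpow (by linarith : (0:ℝ) ≤ 2 * (2*(l:ℝ)*κ+1))
    linear_combination hmul
  refine ⟨hpart1, hpart2, ?_⟩
  have h12 := hpart1.trans hpart2
  rw [mul_add, mul_one, add_le_add_iff_left, mul_one_div, div_le_iff₀ h6]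
  rw [div_le_div_iff₀ h6 (mul_pos hA hD)] at h12
  linarith [h12]
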